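/- arXiv:1707.09171 — 2 statements merged into one kernel-verified Lean document; each statement's English description precedes it below -/
import Mathlib

section
/- Let X be a two-dimensional real normed space with unit sphere S and 0 < ρ < 1, satisfying property (P-ρS). For every u ∈ S, with u⊥ ∈ S the (unique) unit vector Birkhoff-orthogonal to u with u ≺ u⊥, there exists a unique μ > 0 such that both ρ(u − μ u⊥) and ρ(u + μ u⊥) belong to S. -/
open Real Set

/-- `N` is a norm on the two-dimensional real vector space `ℝ × ℝ`. -/
def IsNorm (N : ℝ × ℝ → ℝ) : Prop :=
  (∀ x, N x = 0 ↔ x = 0) ∧ (∀ (a : ℝ) (x : ℝ × ℝ), N (a • x) = |a| * N x) ∧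
    ∀ x y, N (x + y) ≤ N x + N y

/-- The 2D cross product `u ∧ v`; `u ≺ v` means `0 < wedge u v`. -/
def wedge (u v : ℝ × ℝ) : ℝ := u.1 * v.2 - u.2 * v.1

/-- `inf_{t ∈ [0,1]} N ((1−t)u + tv)`, the minimal `N`-norm on the segment `[u,v]`. -/
noncomputable def segInf (N : ℝ × ℝ → ℝ) (u v : ℝ × ℝ) : ℝ :=
  sInf ((fun t : ℝ => N ((1 - t) • u + t • v)) '' Icc (0:ℝ) 1)

/-- Property (P-ρS): every chord of the unit sphere of `N` that supports `ρS`
touches `ρS` at its midpoint. -/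
def PropP (N : ℝ × ℝ → ℝ) (ρ : ℝ) : Prop :=
  ∀ u v : ℝ × ℝ, N u = 1 → N v = 1 → segInf N u v = ρ →
    N ((1/2 : ℝ) • u + (1/2 : ℝ) • v) = ρ

variable {N : ℝ × ℝ → ℝ}

lemma nzero (hN : IsNorm N) : N 0 = 0 := (hN.1 0).mpr rfl

lemma nsmul (hN : IsNorm N) (a : ℝ) (x : ℝ × ℝ) : N (a • x) = |a| * N x := hN.2.1 a x

lemma nsmul' (hN : IsNorm N) {a : ℝ} (ha : 0 ≤ a) (x : ℝ × ℝ) : N (a • x) = a * N x := by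
  rw [nsmul hN, abs_of_nonneg ha]

lemma nneg (hN : IsNorm N) (x : ℝ × ℝ) : N (-x) = N x := by
  have := nsmul hN (-1) x; simpa using this

lemma nonneg' (hN : IsNorm N) (x : ℝ × ℝ) : 0 ≤ N x := by
  have h := hN.2.2 x (-x)
  rw [add_neg_cancel, nzero hN, nneg hN] at h
  linarith

lemma nsub (hN : IsNorm N) (x y : ℝ × ℝ) : N x ≤ N y + N (x - y) := by
  have := hN.2.2 y (x - y); simpa using this

lemma line_lb (hN : IsNorm N) (c d : ℝ × ℝ) (t : ℝ) :
    |t| * N d - N c ≤ N (c + t • d) := by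
  have h := nsub hN (t • d) (c + t • d)
  rw [nsmul hN] at h
  have h2 : N (t • d - (c + t • d)) = N c := by
    have : t • d - (c + t • d) = -c := by module
    rw [this, nneg hN]
  linarith [h, h2.le, h2.ge]

lemma cont_line (hN : IsNorm N) (c d : ℝ × ℝ) :
    Continuous fun t : ℝ => N (c + t • d) := by
  have key : ∀ s t : ℝ, N (c + s • d) - N (c + t • d) ≤ |s - t| * N d := by
    intro s t
    have h := nsub hN (c + s • d) (c + t • d)
    have h2 : (c + s • d) - (c + t • d) = (s - t) • d := by module
    rw [h2, nsmul hN] at h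
    linarith
  have hd := nonneg' hN d
  apply LipschitzWith.continuous (K := Real.toNNReal (N d))
  apply LipschitzWith.of_dist_le_mul
  intro s t
  rw [Real.dist_eq, Real.dist_eq, Real.coe_toNNReal _ hd]
  rw [abs_sub_le_iff]
  constructor
  · rw [mul_comm]; exact key s t
  · rw [mul_comm]; have := key t s; rwa [abs_sub_comm] at this

lemma nconvex (hN : IsNorm N) {p q : ℝ} (hp : 0 ≤ p) (hq : 0 ≤ q) (x y : ℝ × ℝ) :
    N (p • x + q • y) ≤ p * N x + q * N y := by
  have := hN.2.2 (p • x) (q • y)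
  rw [nsmul hN, nsmul hN, abs_of_nonneg hp, abs_of_nonneg hq] at this
  exact this

lemma interp (hN : IsNorm N) (c d : ℝ × ℝ) {r s t : ℝ} (hrs : r < s) (hst : s < t) :
    (t - r) * N (c + s • d) ≤ (t - s) * N (c + r • d) + (s - r) * N (c + t • d) := by
  have htr : (0:ℝ) < t - r := by linarith
  set p := (t - s) / (t - r) with hp
  set q := (s - r) / (t - r) with hq
  have hp0 : 0 ≤ p := by apply div_nonneg <;> linarith
  have hq0 : 0 ≤ q := by apply div_nonneg <;> linarith
  have hco : c + s • d = p • (c + r • d) + q • (c + t • d) := by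
    have h1 : p • (c + r • d) + q • (c + t • d) = (p + q) • c + (p * r + q * t) • d := by
      module
    have h2 : p + q = 1 := by rw [hp, hq]; field_simp; ring
    have h3 : p * r + q * t = s := by rw [hp, hq]; field_simp; ring
    rw [h1, h2, h3, one_smul]
  have hle : N (c + s • d) ≤ p * N (c + r • d) + q * N (c + t • d) := by
    rw [hco]; exact nconvex hN hp0 hq0 _ _
  have := mul_le_mul_of_nonneg_left hle htr.le
  calc (t - r) * N (c + s • d) ≤ (t - r) * (p * N (c + r • d) + q * N (c + t • d)) := this
    _ = (t - s) * N (c + r • d) + (s - r) * N (c + t • d) := by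
        rw [hp, hq]; field_simp


lemma argmin_line (hN : IsNorm N) (c d : ℝ × ℝ) :
    ∃ t₀ ∈ Icc (-8:ℝ) 8, ∀ t ∈ Icc (-8:ℝ) 8, N (c + t₀ • d) ≤ N (c + t • d) := by
  obtain ⟨t₀, ht₀, hmin⟩ := (isCompact_Icc (a := (-8:ℝ)) (b := 8)).exists_isMinOn (f := fun t : ℝ => N (c + t • d))
    (Set.nonempty_Icc.mpr (by norm_num)) ((cont_line hN c d).continuousOn)
  exact ⟨t₀, ht₀, fun t ht => hmin ht⟩

lemma two_roots (hN : IsNorm N) (c d : ℝ × ℝ) {v s t : ℝ} (hv : N c < v)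
    (hs : 0 < s) (ht : 0 < t) (h1 : N (c + s • d) = v) (h2 : N (c + t • d) = v) :
    s = t := by
  rcases lt_trichotomy s t with h | h | h
  · exfalso
    have := interp hN c d hs h
    rw [h1, h2] at this
    have hz : c + (0:ℝ) • d = c := by rw [zero_smul, add_zero]
    rw [hz] at this
    nlinarith
  · exact h
  · exfalso
    have := interp hN c d ht h
    rw [h1, h2] at this
    have hz : c + (0:ℝ) • d = c := by rw [zero_smul, add_zero]
    rw [hz] at this
    nlinarith

lemma segInf_eq {ρ : ℝ} {x y : ℝ × ℝ}
    (hlb : ∀ s ∈ Icc (0:ℝ) 1, ρ ≤ N ((1-s) • x + s • y))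
    (hmem : ∃ s ∈ Icc (0:ℝ) 1, N ((1-s) • x + s • y) = ρ) : segInf N x y = ρ := by
  unfold segInf
  obtain ⟨s0, hs0, hval⟩ := hmem
  apply le_antisymm
  · apply csInf_le
    · refine ⟨ρ, ?_⟩
      rintro z ⟨t, ht, rfl⟩
      exact hlb t ht
    · exact ⟨s0, hs0, hval⟩
  · apply le_csInf
    · exact ⟨_, ⟨0, ⟨le_refl 0, zero_le_one⟩, rfl⟩⟩
    · rintro z ⟨t, ht, rfl⟩
      exact hlb t ht

set_option maxHeartbeats 2000000 in
lemma key (hN : IsNorm N) {ρ : ℝ} (hρ0 : 0 < ρ) (hρ1 : ρ < 1)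
    (hP : PropP N ρ) (u w : ℝ × ℝ) (hu : N u = 1) (hw : N w = 1)
    (hbo : ∀ l : ℝ, N u ≤ N (u + l • w)) {μp μm : ℝ} (hμp : 0 < μp) (hμm : 0 < μm)
    (hfp : N (u + μp • w) = 1/ρ) (hfm : N (u + (-μm) • w) = 1/ρ) : μp ≤ μm := by
  by_contra hcon
  push_neg at hcon
  have h1ρ : 1 < 1/ρ := by rw [lt_div_iff₀ hρ0]; linarith
  set c := (μp - μm) / 2 with hcdef
  have hc0 : 0 < c := by rw [hcdef]; linarith
  have hcμp : c < μp := by rw [hcdef]; linarith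
  clear_value c
  have hbo1 : ∀ l : ℝ, 1 ≤ N (u + l • w) := by intro l; rw [← hu]; exact hbo l
  -- u and w are linearly independent
  have hune : u ≠ 0 := fun h => by rw [h, nzero hN] at hu; norm_num at hu
  have hd : wedge u w ≠ 0 := by
    intro h0
    have hop : ∃ l : ℝ, w = l • u := by
      by_cases h1 : u.1 = 0
      · have h2 : u.2 ≠ 0 := by
          intro h2; exact hune (Prod.ext h1 h2)
        refine ⟨w.2 / u.2, Prod.ext ?_ ?_⟩
        · show w.1 = (w.2 / u.2) * u.1
          unfold wedge at h0
          rw [h1] at h0 ⊢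
          have hw1 : w.1 = 0 := by
            rcases mul_eq_zero.mp (by linarith : u.2 * w.1 = 0) with h | h
            · exact absurd h h2
            · exact h
          rw [hw1, mul_zero]
        · show w.2 = (w.2 / u.2) * u.2
          field_simp
      · refine ⟨w.1 / u.1, Prod.ext ?_ ?_⟩
        · show w.1 = (w.1 / u.1) * u.1
          field_simp
        · show w.2 = (w.1 / u.1) * u.2
          unfold wedge at h0
          field_simp
          nlinarith [h0]
    obtain ⟨l, hl⟩ := hop
    have hl0 : l ≠ 0 := by
      intro h; rw [h, zero_smul] at hl; rw [hl, nzero hN] at hw; norm_num at hw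
    have hcon2 := hbo1 (-(1/l))
    rw [hl, smul_smul] at hcon2
    have : -(1/l) * l = -1 := by field_simp
    rw [this] at hcon2
    have : u + (-1 : ℝ) • u = 0 := by module
    rw [this, nzero hN] at hcon2
    norm_num at hcon2
  set D := wedge u w with hD
  -- coordinate decomposition
  have hdecomp : ∀ x : ℝ × ℝ, x = (wedge x w / D) • u + (wedge u x / D) • w := by
    intro x
    have h1 : x.1 = (wedge x w / D) * u.1 + (wedge u x / D) * w.1 := by
      rw [div_mul_eq_mul_div, div_mul_eq_mul_div, ← add_div, eq_div_iff hd, hD]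
      unfold wedge; ring
    have h2 : x.2 = (wedge x w / D) * u.2 + (wedge u x / D) * w.2 := by
      rw [div_mul_eq_mul_div, div_mul_eq_mul_div, ← add_div, eq_div_iff hd, hD]
      unfold wedge; ring
    exact Prod.ext h1 h2
  -- Claim 1 : the u-coordinate functional is dominated by N
  have hC1 : ∀ x : ℝ × ℝ, wedge x w / D ≤ N x := by
    intro x
    rcases le_or_gt (wedge x w / D) 0 with h | h
    · exact le_trans h (nonneg' hN x)
    · have hx : x = (wedge x w / D) • (u + (wedge u x / wedge x w) • w) := by
        rw [smul_add, smul_smul]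
        have : wedge x w / D * (wedge u x / wedge x w) = wedge u x / D := by
          have hxw : wedge x w ≠ 0 := by
            intro hh; rw [hh] at h; simp at h
          field_simp
        rw [this]
        exact hdecomp x
      calc wedge x w / D = (wedge x w / D) * 1 := by ring
        _ ≤ (wedge x w / D) * N (u + (wedge u x / wedge x w) • w) :=
            mul_le_mul_of_nonneg_left (hbo1 _) h.le
        _ = N x := by rw [← nsmul' hN h.le, ← hx]
  clear_value D
  -- choice of ε
  set ε := min (1/16 : ℝ) (c * (1 - ρ) / (4 * (17 + μp + μm) * (μp + μm))) with hεdef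
  have hA0 : (0:ℝ) < 4 * (17 + μp + μm) * (μp + μm) := by nlinarith
  have hε0 : 0 < ε := lt_min (by norm_num) (div_pos (mul_pos hc0 (by linarith)) hA0)
  have hε16 : ε ≤ 1/16 := min_le_left _ _
  have hεmain : ε * (4 * (17 + μp + μm) * (μp + μm)) ≤ c * (1 - ρ) := by
    have h := min_le_right (1/16 : ℝ) (c * (1 - ρ) / (4 * (17 + μp + μm) * (μp + μm)))
    rw [← hεdef] at h
    calc ε * (4 * (17 + μp + μm) * (μp + μm))
        ≤ (c * (1 - ρ) / (4 * (17 + μp + μm) * (μp + μm))) * (4 * (17 + μp + μm) * (μp + μm)) :=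
          mul_le_mul_of_nonneg_right h hA0.le
      _ = c * (1 - ρ) := div_mul_cancel₀ _ (ne_of_gt hA0)
  clear_value ε
  -- ψ : minimal norm on the tilted line direction
  set dv := w + ε • u with hdv
  obtain ⟨t₀, ht₀mem, ht₀min⟩ := argmin_line hN u dv
  set ψ := N (u + t₀ • dv) with hψdef
  have ht₀abs : |t₀| ≤ 8 := abs_le.mpr ⟨ht₀mem.1, ht₀mem.2⟩
  have hψ1 : ψ ≤ 1 := by
    have h := ht₀min 0 ⟨by norm_num, by norm_num⟩
    rwa [zero_smul, add_zero, hu] at h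
  have hNdv : 1 - ε ≤ N dv := by
    have h := nsub hN w dv
    have h2 : w - dv = (-ε) • u := by rw [hdv]; module
    rw [h2, nsmul hN, hu, mul_one, abs_neg, abs_of_nonneg hε0.le, hw] at h
    linarith
  have hNdvhalf : (1:ℝ)/2 ≤ N dv := by linarith
  have hψglob : ∀ t : ℝ, ψ ≤ N (u + t • dv) := by
    intro t
    rcases le_or_gt (|t|) 8 with h | h
    · exact ht₀min t (abs_le.mp h)
    · have h2 := line_lb hN u dv t
      rw [hu] at h2
      have h3 : (8:ℝ) * (1/2) ≤ |t| * N dv :=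
        mul_le_mul h.le hNdvhalf (by norm_num) (by linarith [abs_nonneg t])
      linarith
  have hψlb : 1 - 8 * ε ≤ ψ := by
    have hid : (u + t₀ • w) - (u + t₀ • dv) = (-(t₀ * ε)) • u := by rw [hdv]; module
    have h := nsub hN (u + t₀ • w) (u + t₀ • dv)
    rw [hid, nsmul hN, hu, mul_one, abs_neg, abs_mul] at h
    have h2 : |t₀| * |ε| ≤ 8 * ε := by
      rw [abs_of_nonneg hε0.le]
      exact mul_le_mul_of_nonneg_right ht₀abs hε0.le
    have h3 := hbo1 t₀
    rw [← hψdef] at h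
    linarith
  have hψhalf : (1:ℝ)/2 ≤ ψ := by linarith
  have hψpos : (0:ℝ) < ψ := by linarith
  clear_value ψ dv
  -- Claim 2 : tilted functional dominated by N/ψ
  have hC2 : ∀ x : ℝ × ℝ, wedge x w / D - ε * (wedge u x / D) ≤ N x / ψ := by
    intro x
    rcases le_or_gt (wedge x w / D - ε * (wedge u x / D)) 0 with h | h
    · exact le_trans h (div_nonneg (nonneg' hN x) hψpos.le)
    · set A := wedge x w / D
      set B := wedge u x / D
      have hAB : (A - ε * B) * (B / (A - ε * B)) = B := by field_simp
      have hx : x = (A - ε * B) • (u + (B / (A - ε * B)) • dv) := by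
        have e1 : (A - ε * B) • (u + (B / (A - ε * B)) • dv)
            = (A - ε * B) • u + ((A - ε * B) * (B / (A - ε * B))) • dv := by
          rw [smul_add, smul_smul]
        rw [e1, hAB, hdv]
        have e2 : (A - ε * B) • u + B • (w + ε • u) = A • u + B • w := by module
        rw [e2]
        exact hdecomp x
      have h2 : N x = (A - ε * B) * N (u + (B / (A - ε * B)) • dv) := by
        rw [← nsmul' hN h.le, ← hx]
      rw [le_div_iff₀ hψpos, h2]
      exact mul_le_mul_of_nonneg_left (hψglob _) h.le
  -- the tilted supporting chord
  set q0 := (ρ/ψ) • u with hq0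
  have hρψ : 0 < ρ/ψ := div_pos hρ0 hψpos
  have hαP : ∀ t : ℝ, wedge (q0 + t • dv) w / D = ρ/ψ + t * ε := by
    intro t
    have h1 : wedge (q0 + t • dv) w = (ρ/ψ + t * ε) * D := by
      rw [hq0, hdv, hD]
      unfold wedge
      simp only [Prod.fst_add, Prod.snd_add, Prod.smul_fst, Prod.smul_snd, smul_eq_mul]
      ring
    rw [h1, mul_div_assoc, div_self hd, mul_one]
  have hβP : ∀ t : ℝ, wedge u (q0 + t • dv) / D = t := by
    intro t
    have h1 : wedge u (q0 + t • dv) = t * D := by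
      rw [hq0, hdv, hD]
      unfold wedge
      simp only [Prod.fst_add, Prod.snd_add, Prod.smul_fst, Prod.smul_snd, smul_eq_mul]
      ring
    rw [h1, mul_div_assoc, div_self hd, mul_one]
  have hgρ : ∀ t : ℝ, ρ ≤ N (q0 + t • dv) := by
    intro t
    have h := hC2 (q0 + t • dv)
    rw [hαP, hβP] at h
    have h2 : ρ/ψ ≤ N (q0 + t • dv) / ψ := by
      calc ρ/ψ = ρ/ψ + t * ε - ε * t := by ring
        _ ≤ N (q0 + t • dv) / ψ := h
    have h3 := mul_le_mul_of_nonneg_right h2 hψpos.le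
    rw [div_mul_cancel₀ _ (ne_of_gt hψpos), div_mul_cancel₀ _ (ne_of_gt hψpos)] at h3
    exact h3
  set τ0 := ρ * t₀ / ψ with hτ0
  have hgτ0 : N (q0 + τ0 • dv) = ρ := by
    have e1 : q0 + τ0 • dv = (ρ/ψ) • (u + t₀ • dv) := by
      rw [hq0, hτ0]
      have : ρ * t₀ / ψ = (ρ/ψ) * t₀ := by ring
      rw [this]
      module
    rw [e1, nsmul' hN hρψ.le, ← hψdef, div_mul_cancel₀ _ (ne_of_gt hψpos)]
  have hτ0b : |τ0| ≤ 16 := by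
    rw [hτ0, abs_div, abs_mul, abs_of_nonneg hρ0.le, abs_of_nonneg hψpos.le]
    calc ρ * |t₀| / ψ ≤ 8 / (1/2) := by
          apply div_le_div₀ (by norm_num) ?_ (by norm_num) hψhalf
          have := mul_le_mul hρ1.le ht₀abs (abs_nonneg t₀) zero_le_one
          linarith
      _ = 16 := by norm_num
  clear_value τ0 q0
  have hNq0 : N q0 ≤ 2 := by
    rw [hq0, nsmul' hN hρψ.le, hu, mul_one]
    calc ρ/ψ ≤ 1/(1/2) := div_le_div₀ zero_le_one hρ1.le (by norm_num) hψhalf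
      _ = 2 := by norm_num
  have hbig : ∀ t : ℝ, |t| * (1/2) - 2 ≤ N (q0 + t • dv) := by
    intro t
    have h := line_lb hN q0 dv t
    have h2 : |t| * (1/2) ≤ |t| * N dv := mul_le_mul_of_nonneg_left hNdvhalf (abs_nonneg t)
    linarith
  -- the two endpoints of the chord on the unit sphere
  have hcont : Continuous fun t : ℝ => N (q0 + t • dv) := cont_line hN q0 dv
  have hτ0le : τ0 ≤ 100 := by
    have := abs_le.mp hτ0b; linarith
  have hτ0ge : (-100 : ℝ) ≤ τ0 := by
    have := abs_le.mp hτ0b; linarith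
  have hg100 : 1 ≤ N (q0 + (100:ℝ) • dv) := by
    have := hbig 100
    rw [show |(100:ℝ)| = 100 by norm_num] at this
    linarith
  have hgm100 : 1 ≤ N (q0 + (-100:ℝ) • dv) := by
    have := hbig (-100)
    rw [show |(-100:ℝ)| = 100 by norm_num] at this
    linarith
  obtain ⟨r2, hr2mem, hgr2'⟩ := intermediate_value_Icc hτ0le hcont.continuousOn
    (⟨by rw [hgτ0]; linarith, hg100⟩ : (1:ℝ) ∈ Icc (N (q0 + τ0 • dv)) (N (q0 + (100:ℝ) • dv)))
  obtain ⟨r1, hr1mem, hgr1'⟩ := intermediate_value_Icc' hτ0ge hcont.continuousOn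
    (⟨by rw [hgτ0]; linarith, hgm100⟩ : (1:ℝ) ∈ Icc (N (q0 + τ0 • dv)) (N (q0 + (-100:ℝ) • dv)))
  have hgr2 : N (q0 + r2 • dv) = 1 := hgr2'
  have hgr1 : N (q0 + r1 • dv) = 1 := hgr1'
  clear hgr2' hgr1'
  have hr2gt : τ0 < r2 := by
    rcases lt_or_eq_of_le hr2mem.1 with h | h
    · exact h
    · exfalso; rw [← h] at hgr2; rw [hgτ0] at hgr2; linarith
  have hr1lt : r1 < τ0 := by
    rcases lt_or_eq_of_le hr1mem.2 with h | h
    · exact h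
    · exfalso; rw [h] at hgr1; rw [hgτ0] at hgr1; linarith
  -- apply property (P-ρS) to this chord
  have hseg : segInf N (q0 + r1 • dv) (q0 + r2 • dv) = ρ := by
    apply segInf_eq
    · intro s _
      have hid : (1-s) • (q0 + r1 • dv) + s • (q0 + r2 • dv)
          = q0 + ((1-s)*r1 + s*r2) • dv := by module
      rw [hid]; exact hgρ _
    · refine ⟨(τ0 - r1) / (r2 - r1), ⟨?_, ?_⟩, ?_⟩
      · apply div_nonneg (by linarith) (by linarith)
      · rw [div_le_one (by linarith)]; linarith
      · have hid : (1 - (τ0 - r1) / (r2 - r1)) • (q0 + r1 • dv)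
            + ((τ0 - r1) / (r2 - r1)) • (q0 + r2 • dv)
            = q0 + ((1 - (τ0 - r1) / (r2 - r1))*r1 + ((τ0 - r1) / (r2 - r1))*r2) • dv := by
          module
        rw [hid]
        have hne' : r2 - r1 ≠ 0 := ne_of_gt (by linarith)
        have hs : (1 - (τ0 - r1) / (r2 - r1))*r1 + ((τ0 - r1) / (r2 - r1))*r2 = τ0 := by
          field_simp
          ring
        rw [hs]
        exact hgτ0
  have hmid := hP _ _ hgr1 hgr2 hseg
  have hmid' : N (q0 + ((r1 + r2)/2) • dv) = ρ := by
    have hid : (1/2 : ℝ) • (q0 + r1 • dv) + (1/2 : ℝ) • (q0 + r2 • dv)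
        = q0 + ((r1 + r2)/2) • dv := by module
    rw [← hid]
    exact hmid
  -- midpoint is on the non-positive side
  have hmidle : (r1 + r2)/2 ≤ 0 := by
    have h1 := hC1 (q0 + ((r1 + r2)/2) • dv)
    rw [hαP, hmid'] at h1
    have hρle : ρ ≤ ρ/ψ := by
      rw [le_div_iff₀ hψpos]
      have := mul_le_mul_of_nonneg_left hψ1 hρ0.le
      linarith
    have h2 : ((r1 + r2)/2) * ε ≤ 0 := by linarith
    by_contra hpos
    push_neg at hpos
    exact absurd h2 (not_le.mpr (mul_pos hpos hε0))
  -- comparison with the straight chord through ρ•u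
  have hdiff : ∀ t : ℝ, N ((q0 + t • dv) - (ρ • u + t • w)) ≤ (16 + |t|) * ε := by
    intro t
    have hid : (q0 + t • dv) - (ρ • u + t • w) = (ρ/ψ - ρ + t * ε) • u := by
      rw [hq0, hdv]; module
    rw [hid, nsmul hN, hu, mul_one]
    have h1 : ρ/ψ - ρ ≤ 16 * ε := by
      rw [sub_le_iff_le_add, div_le_iff₀ hψpos]
      have m1 : ρ * (1 - 8*ε) ≤ ρ * ψ := mul_le_mul_of_nonneg_left hψlb hρ0.le
      have m2 : 16*ε*(1/2) ≤ 16*ε*ψ :=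
        mul_le_mul_of_nonneg_left hψhalf (by linarith)
      have m3 : 8*ε*ρ ≤ 8*ε*1 := mul_le_mul_of_nonneg_left hρ1.le (by linarith)
      have expand : (16*ε + ρ) * ψ = 16*ε*ψ + ρ*ψ := by ring
      linarith [m1, m2, m3, expand.ge, expand.le]
    have h2 : 0 ≤ ρ/ψ - ρ := by
      rw [sub_nonneg, le_div_iff₀ hψpos]
      have := mul_le_mul_of_nonneg_left hψ1 hρ0.le
      linarith
    calc |ρ/ψ - ρ + t * ε| ≤ |ρ/ψ - ρ| + |t * ε| := abs_add_le _ _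
      _ ≤ 16 * ε + |t| * ε := by
          rw [abs_of_nonneg h2, abs_mul, abs_of_nonneg hε0.le]
          exact add_le_add h1 (le_refl _)
      _ = (16 + |t|) * ε := by ring
  have hcompU : ∀ t : ℝ, N (q0 + t • dv) ≤ N (ρ • u + t • w) + (16 + |t|) * ε := by
    intro t
    have := nsub hN (q0 + t • dv) (ρ • u + t • w)
    linarith [hdiff t]
  have hcompL : ∀ t : ℝ, N (ρ • u + t • w) ≤ N (q0 + t • dv) + (16 + |t|) * ε := by
    intro t
    have h := nsub hN (ρ • u + t • w) (q0 + t • dv)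
    have h2 : N ((ρ • u + t • w) - (q0 + t • dv)) = N ((q0 + t • dv) - (ρ • u + t • w)) := by
      rw [← nneg hN]; congr 1; module
    rw [h2] at h
    linarith [hdiff t]
  have hval : ∀ s : ℝ, N (ρ • u + (ρ * s) • w) = ρ * N (u + s • w) := by
    intro s
    have hid : ρ • u + (ρ * s) • w = ρ • (u + s • w) := by module
    rw [hid, nsmul' hN hρ0.le]
  -- quantitative bounds for the two roots via the straight chord
  set ν := 1/ρ with hν0
  have hν : ρ * ν = 1 := by rw [hν0, mul_one_div, div_self (ne_of_gt hρ0)]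
  -- (E1)
  set a1 := ρ * (μp - c/2) with ha1
  have ha1pos : 0 < a1 := by
    rw [ha1]; apply mul_pos hρ0; linarith
  have ha1le : a1 ≤ μp := by
    rw [ha1]
    have := mul_le_mul_of_nonneg_right hρ1.le (by linarith : (0:ℝ) ≤ μp - c/2)
    linarith
  have hint1 := interp hN u w (show (0:ℝ) < μp - c/2 by linarith) (show μp - c/2 < μp by linarith)
  rw [zero_smul, add_zero, hu, hfp] at hint1
  have hfs1 : ρ * (μp * N (u + (μp - c/2) • w)) ≤ μp - c/2 + ρ * (c/2) := by
    have h := mul_le_mul_of_nonneg_left hint1 hρ0.le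
    have e : (μp - c/2 - 0) * (ρ * ν) = μp - c/2 - 0 := by rw [hν, mul_one]
    linarith [h, e]
  have hga1 : N (q0 + a1 • dv) < 1 := by
    have hU := hcompU a1
    have hval1 : N (ρ • u + a1 • w) = ρ * N (u + (μp - c/2) • w) := by
      rw [ha1]; exact hval (μp - c/2)
    rw [hval1, abs_of_pos ha1pos] at hU
    have hstep : μp * (16 + μp) < 2 * (17 + μp + μm) * (μp + μm) := by
      linarith [sq_nonneg μp, sq_nonneg μm, mul_pos hμp hμm, hμp, hμm]
    have hεsmall : μp * ((16 + a1) * ε) < c * (1 - ρ) / 2 := by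
      have h1 : μp * ((16 + a1) * ε) ≤ μp * (16 + μp) * ε := by
        have := mul_le_mul_of_nonneg_left ha1le (mul_nonneg hμp.le hε0.le)
        linarith
      have h2 : μp * (16 + μp) * ε < 2 * (17 + μp + μm) * (μp + μm) * ε :=
        mul_lt_mul_of_pos_right hstep hε0
      linarith [hεmain]
    have hfinal : μp * N (q0 + a1 • dv) < μp * 1 := by
      have hh := mul_le_mul_of_nonneg_left hU hμp.le
      linarith [hfs1, hεsmall, hh]
    exact lt_of_mul_lt_mul_left hfinal hμp.le
  have hr2a1 : a1 < r2 := by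
    rcases lt_or_ge a1 r2 with h | h
    · exact h
    · exfalso
      have hne : r2 ≠ a1 := by
        intro he; rw [he] at hgr2; linarith
      have hlt : r2 < a1 := lt_of_le_of_ne h hne
      have hi := interp hN q0 dv hr2gt hlt
      rw [hgr2, hgτ0] at hi
      have p1 : (a1 - r2) * ρ < (a1 - r2) * 1 := mul_lt_mul_of_pos_left hρ1 (by linarith)
      have p2 : (r2 - τ0) * N (q0 + a1 • dv) < (r2 - τ0) * 1 :=
        mul_lt_mul_of_pos_left hga1 (by linarith)
      linarith [hi, p1, p2]
  -- (E2)
  set a2 := -(ρ * (μm + c/2)) with ha2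
  have ha2neg : a2 < 0 := by
    rw [ha2]
    have := mul_pos hρ0 (by linarith : (0:ℝ) < μm + c/2)
    linarith
  have hint2 := interp hN u w (show -μm - c/2 < -μm by linarith) (show -μm < (0:ℝ) by linarith)
  rw [zero_smul, add_zero, hu, hfm] at hint2
  have hfs2 : μm + c/2 ≤ ρ * (μm * N (u + (-μm - c/2) • w)) + ρ * (c/2) := by
    have h := mul_le_mul_of_nonneg_left hint2 hρ0.le
    have e : (0 - (-μm - c/2)) * (ρ * ν) = 0 - (-μm - c/2) := by rw [hν, mul_one]
    linarith [h, e]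
  have hga2 : 1 < N (q0 + a2 • dv) := by
    have hL := hcompL a2
    have hval2 : N (ρ • u + a2 • w) = ρ * N (u + (-μm - c/2) • w) := by
      have e : a2 = ρ * (-μm - c/2) := by rw [ha2]; ring
      rw [e]; exact hval _
    rw [hval2] at hL
    have habs2 : |a2| ≤ μm + μp := by
      rw [ha2, abs_neg,
        abs_of_nonneg (mul_nonneg hρ0.le (by linarith : (0:ℝ) ≤ μm + c/2))]
      have := mul_le_mul_of_nonneg_right hρ1.le (by linarith : (0:ℝ) ≤ μm + c/2)
      linarith
    have hstep : μm * (16 + μm + μp) < 2 * (17 + μp + μm) * (μp + μm) := by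
      linarith [sq_nonneg μp, sq_nonneg μm, mul_pos hμp hμm, hμp, hμm]
    have hεsmall2 : μm * ((16 + |a2|) * ε) < c * (1 - ρ) / 2 := by
      have h1 : μm * ((16 + |a2|) * ε) ≤ μm * (16 + μm + μp) * ε := by
        have := mul_le_mul_of_nonneg_left habs2 (mul_nonneg hμm.le hε0.le)
        linarith
      have h2 : μm * (16 + μm + μp) * ε < 2 * (17 + μp + μm) * (μp + μm) * ε :=
        mul_lt_mul_of_pos_right hstep hε0
      linarith [hεmain]
    have hfinal : μm * 1 < μm * N (q0 + a2 • dv) := by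
      have hh := mul_le_mul_of_nonneg_left hL hμm.le
      linarith [hfs2, hεsmall2, hh]
    exact lt_of_mul_lt_mul_left hfinal hμm.le
  have hr1a2 : a2 < r1 := by
    rcases lt_or_ge a2 r1 with h | h
    · exact h
    · exfalso
      have hne : r1 ≠ a2 := by
        intro he; rw [he] at hgr1; linarith
      have hlt : r1 < a2 := lt_of_le_of_ne h hne
      have ha2r2 : a2 < r2 := by linarith
      have hi := interp hN q0 dv hlt ha2r2
      rw [hgr1, hgr2] at hi
      have p : (r2 - r1) * 1 < (r2 - r1) * N (q0 + a2 • dv) :=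
        mul_lt_mul_of_pos_left hga2 (by linarith)
      linarith [hi, p]
  -- contradiction
  have hsum : a1 + a2 = ρ * c := by rw [ha1, ha2, hcdef]; ring
  have : 0 < (r1 + r2)/2 := by
    have := mul_pos hρ0 hc0
    linarith [hr2a1, hr1a2, hsum]
  linarith [hmidle]

/-- Under (P-ρS), for `u ∈ S` with Birkhoff-orthogonal successor
`w = u⊥ ∈ S` (`u ≺ w`, `u ⊥ w`), there is a unique `μ > 0` such that both
`ρ(u − μw)` and `ρ(u + μw)` lie on `S`. -/
theorem stmt_6 (N : ℝ × ℝ → ℝ) (hN : IsNorm N) (ρ : ℝ) (hρ0 : 0 < ρ) (hρ1 : ρ < 1)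
    (hP : PropP N ρ) (u w : ℝ × ℝ) (hu : N u = 1) (hw : N w = 1)
    (hord : 0 < wedge u w) (hbo : ∀ l : ℝ, N u ≤ N (u + l • w)) :
    ∃! μ : ℝ, 0 < μ ∧ N (ρ • (u - μ • w)) = 1 ∧ N (ρ • (u + μ • w)) = 1 := by
  have h1ρ : 1 < 1/ρ := by rw [lt_div_iff₀ hρ0]; linarith
  have hf0 : N (u + (0:ℝ) • w) = 1 := by rw [zero_smul, add_zero, hu]
  have hT0 : (0:ℝ) ≤ 1/ρ + 2 := by linarith
  have hw' : N (-w) = 1 := by rw [nneg hN, hw]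
  have hbo' : ∀ l : ℝ, N u ≤ N (u + l • (-w)) := by
    intro l
    have e : u + l • (-w) = u + (-l) • w := by module
    rw [e]; exact hbo (-l)
  -- positive root μp in direction w
  have hfT : 1/ρ ≤ N (u + (1/ρ + 2) • w) := by
    have h := line_lb hN u w (1/ρ + 2)
    rw [hu, hw, abs_of_nonneg hT0, mul_one] at h
    linarith
  obtain ⟨μp, hμpmem, hμpval'⟩ := intermediate_value_Icc hT0
    ((cont_line hN u w).continuousOn)
    (⟨by rw [hf0]; linarith, hfT⟩ :
      (1/ρ) ∈ Icc (N (u + (0:ℝ) • w)) (N (u + (1/ρ + 2) • w)))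
  have hμpval : N (u + μp • w) = 1/ρ := hμpval'
  have hμp0 : 0 < μp := by
    rcases lt_or_eq_of_le hμpmem.1 with h | h
    · exact h
    · exfalso; rw [← h] at hμpval; rw [hf0] at hμpval; linarith
  -- positive root μm in direction -w
  have hf0' : N (u + (0:ℝ) • (-w)) = 1 := by rw [zero_smul, add_zero, hu]
  have hfT' : 1/ρ ≤ N (u + (1/ρ + 2) • (-w)) := by
    have h := line_lb hN u (-w) (1/ρ + 2)
    rw [hu, hw', abs_of_nonneg hT0, mul_one] at h
    linarith
  obtain ⟨μm, hμmmem, hμmval'⟩ := intermediate_value_Icc hT0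
    ((cont_line hN u (-w)).continuousOn)
    (⟨by rw [hf0']; linarith, hfT'⟩ :
      (1/ρ) ∈ Icc (N (u + (0:ℝ) • (-w))) (N (u + (1/ρ + 2) • (-w))))
  have hμmval : N (u + μm • (-w)) = 1/ρ := hμmval'
  have hμm0 : 0 < μm := by
    rcases lt_or_eq_of_le hμmmem.1 with h | h
    · exact h
    · exfalso; rw [← h] at hμmval; rw [hf0'] at hμmval; linarith
  have hfm : N (u + (-μm) • w) = 1/ρ := by
    have e : u + (-μm) • w = u + μm • (-w) := by module
    rw [e]; exact hμmval
  have hfp' : N (u + (-μp) • (-w)) = 1/ρ := by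
    have e : u + (-μp) • (-w) = u + μp • w := by module
    rw [e]; exact hμpval
  have hle1 : μp ≤ μm := key hN hρ0 hρ1 hP u w hu hw hbo hμp0 hμm0 hμpval hfm
  have hle2 : μm ≤ μp := key hN hρ0 hρ1 hP u (-w) hu hw' hbo' hμm0 hμp0 hμmval hfp'
  have heq : μp = μm := le_antisymm hle1 hle2
  refine ⟨μp, ⟨hμp0, ?_, ?_⟩, ?_⟩
  · have e : ρ • (u - μp • w) = ρ • (u + (-μp) • w) := by module
    rw [e, nsmul' hN hρ0.le, heq, hfm]
    field_simp
  · rw [nsmul' hN hρ0.le, hμpval]; field_simp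
  · rintro μ' ⟨hμ'0, _, hm2⟩
    have h2 : N (u + μ' • w) = 1/ρ := by
      rw [nsmul' hN hρ0.le] at hm2
      rw [eq_div_iff (ne_of_gt hρ0)]
      linarith [hm2]
    exact two_roots hN u w (v := 1/ρ) (by rw [hu]; exact h1ρ) hμ'0 hμp0 h2 hμpval
end

section
/- Let X be a two-dimensional real normed space with unit sphere S and 0 < ρ < 1, satisfying property (P-ρS). If u, v ∈ S and the segment [u, v] supports ρS (i.e., inf_{t∈[0,1]}‖(1−t)u + tv‖ = ρ), then u + v is Birkhoff-orthogonal to v − u, i.e., ‖u+v‖ ≤ ‖(u+v) + λ(v−u)‖ for all λ ∈ ℝ. -/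
open Real Set

lemma isnorm_nonneg (N : ℝ × ℝ → ℝ) (hN : IsNorm N) (x : ℝ × ℝ) : 0 ≤ N x := by
  obtain ⟨h0, hs, ht⟩ := hN
  have h1 : N ((-1 : ℝ) • x) = N x := by rw [hs]; simp
  have h2 : N (x + (-1 : ℝ) • x) ≤ N x + N ((-1 : ℝ) • x) := ht _ _
  have h3 : x + (-1 : ℝ) • x = 0 := by module
  rw [h3, (h0 0).2 rfl, h1] at h2
  linarith

/-- Under (P-ρS), if the chord `[u,v]` of `S` supports `ρS`,
then `u + v` is Birkhoff-orthogonal to `v − u`. -/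
theorem stmt_7 (N : ℝ × ℝ → ℝ) (hN : IsNorm N) (ρ : ℝ) (hρ0 : 0 < ρ) (hρ1 : ρ < 1)
    (hP : PropP N ρ) (u v : ℝ × ℝ) (hu : N u = 1) (hv : N v = 1)
    (hsup : segInf N u v = ρ) :
    ∀ l : ℝ, N (u + v) ≤ N ((u + v) + l • (v - u)) := by
  obtain ⟨h0, hs, ht⟩ := hN
  intro l
  have hm : N ((1/2 : ℝ) • u + (1/2 : ℝ) • v) = ρ := hP u v hu hv hsup
  have huv : N (u + v) = 2 * ρ := by
    have : u + v = (2 : ℝ) • ((1/2 : ℝ) • u + (1/2 : ℝ) • v) := by module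
    rw [this, hs, hm]; norm_num
  set t : ℝ := (1 + l) / 2 with htdef
  have hrw : (u + v) + l • (v - u) = (2 : ℝ) • ((1 - t) • u + t • v) := by
    rw [htdef]; module
  have hval : N ((u + v) + l • (v - u)) = 2 * N ((1 - t) • u + t • v) := by
    rw [hrw, hs]; norm_num
  rw [huv, hval]
  clear_value t
  have key : ρ ≤ N ((1 - t) • u + t • v) := by
    rcases le_or_gt t 1 with ht1 | ht1
    · rcases le_or_gt 0 t with ht0 | ht0
      · -- t ∈ [0,1] : inf bound
        have hmem : N ((1 - t) • u + t • v) ∈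
            (fun s : ℝ => N ((1 - s) • u + s • v)) '' Icc (0:ℝ) 1 :=
          ⟨t, ⟨ht0, ht1⟩, rfl⟩
        have hbdd : BddBelow ((fun s : ℝ => N ((1 - s) • u + s • v)) '' Icc (0:ℝ) 1) :=
          ⟨0, fun x hx => by obtain ⟨s, _, rfl⟩ := hx; exact isnorm_nonneg N ⟨h0, hs, ht⟩ _⟩
        have := csInf_le hbdd hmem
        rw [show sInf ((fun s : ℝ => N ((1 - s) • u + s • v)) '' Icc (0:ℝ) 1) = segInf N u v
          from rfl, hsup] at this
        exact this
      · -- t < 0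
        have h1t : (0:ℝ) < 1 - t := by linarith
        have hne : (1 - t) ≠ 0 := ne_of_gt h1t
        have hdecomp : u = (1 / (1 - t)) • ((1 - t) • u + t • v) + (-t / (1 - t)) • v := by
          match_scalars <;> field_simp <;> ring
        have h2 : N u ≤ N ((1 / (1 - t)) • ((1 - t) • u + t • v)) + N ((-t / (1 - t)) • v) := by
          nth_rewrite 1 [hdecomp]; exact ht _ _
        rw [hs, hs, hu, hv] at h2
        rw [abs_of_pos (by positivity), abs_of_pos (div_pos (by linarith) h1t)] at h2
        rw [mul_one, one_div, inv_mul_eq_div, ← add_div, le_div_iff₀ h1t] at h2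
        nlinarith [h2]
    · -- t > 1
      have ht0 : (0:ℝ) < t := by linarith
      have htne : t ≠ 0 := ne_of_gt ht0
      have hdecomp : v = (1 / t) • ((1 - t) • u + t • v) + ((t - 1) / t) • u := by
        match_scalars <;> field_simp <;> ring
      have h2 : N v ≤ N ((1 / t) • ((1 - t) • u + t • v)) + N (((t - 1) / t) • u) := by
        nth_rewrite 1 [hdecomp]; exact ht _ _
      rw [hs, hs, hu, hv] at h2
      rw [abs_of_pos (by positivity), abs_of_pos (div_pos (by linarith) ht0)] at h2
      rw [mul_one, one_div, inv_mul_eq_div, ← add_div, le_div_iff₀ ht0] at h2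
      nlinarith [h2]
  linarith
end
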